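/- For any real θ and natural numbers m, q, k with q ≤ k < m−q, the sum (1/m) ∑_{ℓ=0}^{m-1} (sin((θ+πℓ)/m))^{2k} · cos(2q(θ+πℓ)/m) equals ((−1)^q/4^k)·C(2k, k−q). -/

import Mathlib

open Real Finset

lemma sum_exp_aux (m : ℕ) (hm : 0 < m) (s : ℤ) (hlt : s.natAbs < m) (a : ℝ) :
    ∑ ℓ ∈ Finset.range m, Complex.exp (2 * (s:ℂ) * (((a:ℂ) + Real.pi * ℓ) / m) * Complex.I)
      = if s = 0 then (m:ℂ) else 0 := by
  have hm0 : (m:ℂ) ≠ 0 := by exact_mod_cast hm.ne'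
  by_cases hs : s = 0
  · simp [hs]
  · rw [if_neg hs]
    set c : ℂ := Complex.exp (2 * Real.pi * s / m * Complex.I) with hc
    have hterm : ∀ ℓ ∈ Finset.range m,
        Complex.exp (2 * (s:ℂ) * (((a:ℂ) + Real.pi * ℓ) / m) * Complex.I)
          = Complex.exp (2 * (s:ℂ) * ((a:ℂ) / m) * Complex.I) * c ^ ℓ := by
      intro ℓ _
      rw [hc, ← Complex.exp_nat_mul, ← Complex.exp_add]
      congr 1
      field_simp
    rw [Finset.sum_congr rfl hterm, ← Finset.mul_sum]
    have hc1 : c ≠ 1 := by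
      rw [hc, Ne, Complex.exp_eq_one_iff]
      rintro ⟨n, hn⟩
      have hπ : (Real.pi : ℂ) ≠ 0 := by exact_mod_cast Real.pi_ne_zero
      have hsnm : (s : ℂ) = n * m := by
        have hI := Complex.I_ne_zero
        field_simp at hn
        have h2 : (2 * (Real.pi:ℂ) * Complex.I) * s = (2 * (Real.pi:ℂ) * Complex.I) * ((n:ℂ) * m) := by
          linear_combination (2 * (Real.pi:ℂ) * Complex.I) * hn
        exact mul_left_cancel₀ (mul_ne_zero (mul_ne_zero two_ne_zero hπ) hI) h2
      have hsnm' : s = n * m := by exact_mod_cast hsnm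
      rcases eq_or_ne n 0 with h | h
      · exact hs (by simp [hsnm', h])
      · have hab : s.natAbs = n.natAbs * m := by
          rw [hsnm', Int.natAbs_mul, Int.natAbs_natCast]
        have : 1 ≤ n.natAbs := Int.natAbs_pos.mpr h
        nlinarith [hlt]
    have hcm : c ^ m = 1 := by
      rw [hc, ← Complex.exp_nat_mul]
      rw [show (m:ℂ) * (2 * Real.pi * s / m * Complex.I) = s * (2 * Real.pi * Complex.I) by
        field_simp]
      exact_mod_cast Complex.exp_int_mul_two_pi_mul_I s
    rw [geom_sum_eq hc1, hcm]
    simp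

lemma sin_pow_expand (x : ℂ) (k : ℕ) :
    Complex.sin x ^ (2*k)
      = ((-1:ℂ)^k / 4^k) * ∑ j ∈ Finset.range (2*k+1),
          ((-1:ℂ)^j * (Nat.choose (2*k) j : ℂ)) *
            Complex.exp ((((2*((k:ℤ)-j)) : ℤ) : ℂ) * x * Complex.I) := by
  rw [Complex.sin]
  have hexp : (Complex.exp (-x*Complex.I) - Complex.exp (x*Complex.I))^(2*k)
      = ∑ j ∈ Finset.range (2*k+1), ((-1:ℂ)^j * (Nat.choose (2*k) j : ℂ)) *
          Complex.exp ((((2*((k:ℤ)-j)) : ℤ) : ℂ) * x * Complex.I) := by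
    rw [sub_eq_add_neg, add_pow]
    refine Finset.sum_congr rfl fun j hj => ?_
    rw [Finset.mem_range] at hj
    have hj' : j ≤ 2*k := by omega
    rw [neg_pow, ← Complex.exp_nat_mul, ← Complex.exp_nat_mul]
    have h1 : (-1:ℂ)^(2*k - j) = (-1)^j := by
      have hmod : (2*k - j) % 2 = j % 2 := by omega
      rw [neg_one_pow_eq_pow_mod_two, hmod, ← neg_one_pow_eq_pow_mod_two]
    rw [h1]
    have h3 : Complex.exp ((j:ℂ) * (-x*Complex.I)) * Complex.exp (((2*k - j : ℕ):ℂ) * (x*Complex.I))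
        = Complex.exp ((((2*((k:ℤ)-j)) : ℤ) : ℂ) * x * Complex.I) := by
      rw [← Complex.exp_add]
      congr 1
      rw [Nat.cast_sub hj']
      push_cast
      ring
    linear_combination ((-1:ℂ)^j * ((2*k).choose j : ℂ)) * h3
  rw [div_pow, mul_pow, hexp]
  rw [show (Complex.I)^(2*k) = (-1:ℂ)^k by rw [pow_mul, Complex.I_sq]]
  rw [show ((2:ℂ))^(2*k) = 4^k by rw [pow_mul]; norm_num]
  ring

lemma sin_pow_cos (x : ℂ) (k q : ℕ) :
    Complex.sin x ^ (2*k) * Complex.cos (2*(q:ℂ)*x)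
      = ((-1:ℂ)^k / 4^k / 2) * ∑ j ∈ Finset.range (2*k+1),
          ((-1:ℂ)^j * (Nat.choose (2*k) j : ℂ)) *
            (Complex.exp ((((2*((k:ℤ)+q-j)) : ℤ) : ℂ) * x * Complex.I)
             + Complex.exp ((((2*((k:ℤ)-q-j)) : ℤ) : ℂ) * x * Complex.I)) := by
  rw [sin_pow_expand, Complex.cos]
  rw [mul_assoc, Finset.sum_mul]
  rw [Finset.mul_sum, Finset.mul_sum]
  refine Finset.sum_congr rfl fun j hj => ?_
  have e1 : Complex.exp ((((2*((k:ℤ)-j)) : ℤ) : ℂ) * x * Complex.I)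
        * Complex.exp (2 * (q:ℂ) * x * Complex.I)
      = Complex.exp ((((2*((k:ℤ)+q-j)) : ℤ) : ℂ) * x * Complex.I) := by
    rw [← Complex.exp_add]; congr 1; push_cast; ring
  have e2 : Complex.exp ((((2*((k:ℤ)-j)) : ℤ) : ℂ) * x * Complex.I)
        * Complex.exp (-(2 * (q:ℂ) * x) * Complex.I)
      = Complex.exp ((((2*((k:ℤ)-q-j)) : ℤ) : ℂ) * x * Complex.I) := by
    rw [← Complex.exp_add]; congr 1; push_cast; ring
  linear_combination ((-1:ℂ)^k/4^k/2) * ((-1:ℂ)^j * ((2*k).choose j : ℂ)) * e1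
    + ((-1:ℂ)^k/4^k/2) * ((-1:ℂ)^j * ((2*k).choose j : ℂ)) * e2

theorem stmt_14 (θ : ℝ) (m q k : ℕ) (h1 : q ≤ k) (h2 : k < m - q) :
    (1 / (m : ℝ)) * ∑ ℓ ∈ Finset.range m,
        (Real.sin ((θ + Real.pi * ℓ) / m)) ^ (2 * k)
          * Real.cos (2 * q * (θ + Real.pi * ℓ) / m)
      = ((-1) ^ q / 4 ^ k) * (Nat.choose (2 * k) (k - q) : ℝ) := by
  have hkq : k + q < m := by omega
  have hm0 : 0 < m := by omega
  set x : ℕ → ℂ := fun ℓ => ((θ:ℂ) + Real.pi * ℓ) / m with hx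
  set t : ℕ → ℂ := fun j => ((-1:ℂ)^j * (Nat.choose (2*k) j : ℂ)) with ht
  have hE1 : ∀ j ∈ Finset.range (2*k+1),
      ∑ ℓ ∈ Finset.range m, Complex.exp ((((2*((k:ℤ)+q-j)) : ℤ) : ℂ) * x ℓ * Complex.I)
        = if ((k:ℤ)+q-j) = 0 then (m:ℂ) else 0 := by
    intro j hj
    rw [Finset.mem_range] at hj
    have hlt : ((k:ℤ)+q-j).natAbs < m := by omega
    rw [← sum_exp_aux m hm0 ((k:ℤ)+q-j) hlt θ]
    refine Finset.sum_congr rfl fun ℓ _ => ?_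
    congr 1
    push_cast
    ring
  have hE2 : ∀ j ∈ Finset.range (2*k+1),
      ∑ ℓ ∈ Finset.range m, Complex.exp ((((2*((k:ℤ)-q-j)) : ℤ) : ℂ) * x ℓ * Complex.I)
        = if ((k:ℤ)-q-j) = 0 then (m:ℂ) else 0 := by
    intro j hj
    rw [Finset.mem_range] at hj
    have hlt : ((k:ℤ)-q-j).natAbs < m := by omega
    rw [← sum_exp_aux m hm0 ((k:ℤ)-q-j) hlt θ]
    refine Finset.sum_congr rfl fun ℓ _ => ?_
    congr 1
    push_cast
    ring
  have key : ∑ ℓ ∈ Finset.range m, Complex.sin (x ℓ) ^ (2*k) * Complex.cos (2*(q:ℂ)*(x ℓ))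
      = m * (((-1:ℂ)^q/4^k) * ((Nat.choose (2*k) (k-q)) : ℂ)) := by
    calc ∑ ℓ ∈ Finset.range m, Complex.sin (x ℓ) ^ (2*k) * Complex.cos (2*(q:ℂ)*(x ℓ))
        = ∑ ℓ ∈ Finset.range m, ((-1:ℂ)^k / 4^k / 2) * ∑ j ∈ Finset.range (2*k+1),
            t j * (Complex.exp ((((2*((k:ℤ)+q-j)) : ℤ) : ℂ) * x ℓ * Complex.I)
              + Complex.exp ((((2*((k:ℤ)-q-j)) : ℤ) : ℂ) * x ℓ * Complex.I)) :=
          Finset.sum_congr rfl fun ℓ _ => sin_pow_cos (x ℓ) k q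
      _ = ((-1:ℂ)^k / 4^k / 2) * ∑ j ∈ Finset.range (2*k+1),
            t j * ((∑ ℓ ∈ Finset.range m, Complex.exp ((((2*((k:ℤ)+q-j)) : ℤ) : ℂ) * x ℓ * Complex.I))
              + (∑ ℓ ∈ Finset.range m, Complex.exp ((((2*((k:ℤ)-q-j)) : ℤ) : ℂ) * x ℓ * Complex.I))) := by
          rw [← Finset.mul_sum]
          congr 1
          rw [Finset.sum_comm]
          refine Finset.sum_congr rfl fun j _ => ?_
          rw [← Finset.mul_sum, Finset.sum_add_distrib]
      _ = ((-1:ℂ)^k / 4^k / 2) * ∑ j ∈ Finset.range (2*k+1),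
            t j * ((if ((k:ℤ)+q-j) = 0 then (m:ℂ) else 0)
              + (if ((k:ℤ)-q-j) = 0 then (m:ℂ) else 0)) := by
          congr 1
          refine Finset.sum_congr rfl fun j hj => ?_
          rw [hE1 j hj, hE2 j hj]
      _ = ((-1:ℂ)^k / 4^k / 2) *
            ((∑ j ∈ Finset.range (2*k+1), t j * (if ((k:ℤ)+q-j) = 0 then (m:ℂ) else 0))
             + ∑ j ∈ Finset.range (2*k+1), t j * (if ((k:ℤ)-q-j) = 0 then (m:ℂ) else 0)) := by
          rw [← Finset.sum_add_distrib]
          congr 1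
          refine Finset.sum_congr rfl fun j _ => ?_
          rw [mul_add]
      _ = m * (((-1:ℂ)^q/4^k) * ((Nat.choose (2*k) (k-q)) : ℂ)) := by
          have hA : ∑ j ∈ Finset.range (2*k+1), t j * (if ((k:ℤ)+q-j) = 0 then (m:ℂ) else 0)
              = t (k+q) * m := by
            rw [Finset.sum_eq_single (k+q)]
            · rw [if_pos (by push_cast; ring)]
            · intro j _ hne
              rw [if_neg (by omega), mul_zero]
            · intro h
              exact absurd (Finset.mem_range.mpr (by omega)) h
          have hB : ∑ j ∈ Finset.range (2*k+1), t j * (if ((k:ℤ)-q-j) = 0 then (m:ℂ) else 0)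
              = t (k-q) * m := by
            rw [Finset.sum_eq_single (k-q)]
            · rw [if_pos (by omega)]
            · intro j _ hne
              rw [if_neg (by omega), mul_zero]
            · intro h
              exact absurd (Finset.mem_range.mpr (by omega)) h
          rw [hA, hB, ht]
          simp only
          have hch : Nat.choose (2*k) (k+q) = Nat.choose (2*k) (k-q) := by
            rw [← Nat.choose_symm (by omega : k+q ≤ 2*k)]
            congr 1
            omega
          have hsign1 : (-1:ℂ)^(k+q) = (-1)^k * (-1)^q := by rw [pow_add]
          have hsign2 : (-1:ℂ)^(k-q) = (-1)^k * (-1)^q := by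
            rw [← hsign1, neg_one_pow_eq_pow_mod_two, show (k-q) % 2 = (k+q) % 2 by omega,
              ← neg_one_pow_eq_pow_mod_two]
          rw [hch, hsign1, hsign2]
          have h4 : (-1:ℂ)^k * (-1)^k = 1 := by
            rw [← pow_add, ← two_mul, pow_mul]
            norm_num
          linear_combination ((-1:ℂ)^q * ((Nat.choose (2*k) (k-q)) : ℂ) * m / 4^k) * h4
  have hre : ((∑ ℓ ∈ Finset.range m,
        (Real.sin ((θ + Real.pi * ℓ) / m)) ^ (2 * k)
          * Real.cos (2 * q * (θ + Real.pi * ℓ) / m) : ℝ) : ℂ)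
      = ∑ ℓ ∈ Finset.range m, Complex.sin (x ℓ) ^ (2*k) * Complex.cos (2*(q:ℂ)*(x ℓ)) := by
    push_cast
    refine Finset.sum_congr rfl fun ℓ _ => ?_
    rw [hx]
    congr 2
    ring
  have hmc : (m:ℂ) ≠ 0 := by exact_mod_cast hm0.ne'
  apply Complex.ofReal_injective
  rw [Complex.ofReal_mul, hre, key]
  push_cast
  field_simp
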